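/- Let A and B be finite abelian groups of orders m and n respectively, each containing more than one element of order 2. Suppose the cycle C_m is A-cordial and the cycle C_n is B-cordial. Then the disjoint union of two cycles of length mn/2 is (A × B)-cordial. (Note that m is even since A has an element of order 2, so mn/2 is an integer; assume mn/2 ≥ 3.) -/

import Mathlib

/-- The edge labeling induced by a vertex labeling `c`: edge `{u, v}` gets label `c u + c v`. -/
def edgeLabel {V A : Type*} [AddCommMonoid A] (c : V → A) : Sym2 V → A :=
  Sym2.lift ⟨fun u v => c u + c v, fun _ _ => add_comm _ _⟩

/-- `c` is an `A`-cordial labeling of `G`: the vertex-label classes differ in size by at most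
one, and the induced edge-label classes differ in size by at most one. -/
def IsCordialLabeling {V A : Type*} [AddCommMonoid A] (G : SimpleGraph V) (c : V → A) : Prop :=
  (∀ a b : A, {v : V | c v = a}.ncard ≤ {v : V | c v = b}.ncard + 1) ∧
  (∀ a b : A, {e ∈ G.edgeSet | edgeLabel c e = a}.ncard ≤
      {e ∈ G.edgeSet | edgeLabel c e = b}.ncard + 1)

/-- A graph `G` is `A`-cordial if it admits an `A`-cordial labeling. -/
def IsCordial (A : Type*) [AddCommMonoid A] {V : Type*} (G : SimpleGraph V) : Prop :=
  ∃ c : V → A, IsCordialLabeling G c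

open SimpleGraph

/-- The disjoint union of `n` copies of a graph `G`, one copy for each element of `Fin n`. -/
def disjointCopies {V : Type*} (n : ℕ) (G : SimpleGraph V) : SimpleGraph (Fin n × V) where
  Adj x y := x.1 = y.1 ∧ G.Adj x.2 y.2
  symm := ⟨fun _ _ ⟨h1, h2⟩ => ⟨h1.symm, h2.symm⟩⟩
  loopless := ⟨fun x hx => G.loopless.irrefl x.2 hx.2⟩

open Function
open Fin.NatCast

section helpers
variable {W A : Type*}

lemma ncard_fiber_eq_filter [Fintype W] (T : W → A) (a : A)
    [DecidablePred fun w => T w = a] :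
    {w | T w = a}.ncard = (Finset.univ.filter fun w => T w = a).card := by
  rw [Set.ncard_eq_toFinset_card', Set.toFinset_setOf]

lemma bijective_of_card_of_fibers [Fintype W] [Fintype A] (T : W → A)
    (hcard : Fintype.card W = Fintype.card A)
    (h : ∀ a b : A, {w | T w = a}.ncard ≤ {w | T w = b}.ncard + 1) :
    Function.Bijective T := by
  classical
  rw [Fintype.bijective_iff_surjective_and_card]
  refine ⟨fun x => ?_, hcard⟩
  by_contra hx
  have hx0 : {w | T w = x}.ncard = 0 := by
    rw [Set.ncard_eq_zero (Set.toFinite _)]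
    ext w
    simp only [Set.mem_setOf_eq, Set.mem_empty_iff_false, iff_false]
    exact fun hw => hx ⟨w, hw⟩
  have hsum : Fintype.card W = ∑ a : A, (Finset.univ.filter fun w => T w = a).card :=
    Finset.card_eq_sum_card_fiberwise (fun w _ => Finset.mem_univ (T w))
  have hsum2 : Fintype.card W = ∑ a : A, {w | T w = a}.ncard := by
    rw [hsum]
    exact Finset.sum_congr rfl (fun a _ => (ncard_fiber_eq_filter T a).symm)
  have hlt : ∑ a : A, {w | T w = a}.ncard < ∑ _a : A, 1 := by
    refine Finset.sum_lt_sum (fun i _ => by have := h i x; omega)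
      ⟨x, Finset.mem_univ x, by omega⟩
  simp only [Finset.sum_const, Finset.card_univ, smul_eq_mul, mul_one] at hlt
  omega

lemma fiber_ncard_one (T : W → A) (hT : Function.Bijective T) (x : A) :
    {w | T w = x}.ncard = 1 := by
  obtain ⟨w, hw⟩ := hT.2 x
  have : {w' | T w' = x} = {w} := by
    ext w'
    simp only [Set.mem_setOf_eq, Set.mem_singleton_iff]
    exact ⟨fun h => hT.1 (h.trans hw.symm), fun h => h ▸ hw⟩
  rw [this, Set.ncard_singleton]

lemma edge_fiber_eq {V A ι : Type*} [AddCommMonoid A] {G : SimpleGraph V} (ε : ι → Sym2 V)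
    (hinj : Function.Injective ε) (hr : G.edgeSet = Set.range ε) (c : V → A) (x : A) :
    {e ∈ G.edgeSet | edgeLabel c e = x}.ncard = {i | edgeLabel c (ε i) = x}.ncard := by
  have himg : {e ∈ G.edgeSet | edgeLabel c e = x} = ε '' {i | edgeLabel c (ε i) = x} := by
    ext e
    simp only [Set.mem_setOf_eq, Set.mem_image, hr, Set.mem_range]
    constructor
    · rintro ⟨⟨i, rfl⟩, hl⟩; exact ⟨i, hl, rfl⟩
    · rintro ⟨i, hl, rfl⟩; exact ⟨⟨i, rfl⟩, hl⟩
  rw [himg, Set.ncard_image_of_injective _ hinj]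

end helpers

lemma cycle_edge_enum {m : ℕ} [NeZero m] (hm : 3 ≤ m) :
    Function.Injective (fun i : Fin m => s(i, i + 1)) ∧
    (cycleGraph m).edgeSet = Set.range (fun i : Fin m => s(i, i + 1)) := by
  have hone : (1 : Fin m).val = 1 := by
    rw [← Nat.cast_one (R := Fin m), Fin.val_natCast]
    exact Nat.mod_eq_of_lt (by omega)
  have h2 : ((1 : Fin m) + 1) ≠ 0 := by
    intro h
    have h2' : ((2 : ℕ) : Fin m) = 0 := by
      rw [show (2 : ℕ) = 1 + 1 from rfl, Nat.cast_add, Nat.cast_one]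
      exact h
    have := congrArg Fin.val h2'
    rw [Fin.val_natCast, Fin.val_zero, Nat.mod_eq_of_lt (by omega)] at this
    omega
  have hadj : ∀ i : Fin m, (cycleGraph m).Adj i (i + 1) := by
    intro i
    rw [cycleGraph_adj']
    right
    rw [add_sub_cancel_left]
    exact hone
  constructor
  · intro i j hij
    simp only [Sym2.eq, Sym2.rel_iff', Prod.mk.injEq, Prod.swap_prod_mk] at hij
    rcases hij with ⟨h1, -⟩ | ⟨h1, hh2⟩
    · exact h1
    · exfalso
      rw [← hh2, add_assoc] at h1
      exact h2 (left_eq_add.mp h1)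
  · ext e
    induction e with
    | _ u v =>
      simp only [mem_edgeSet, Set.mem_range]
      constructor
      · intro huv
        rw [cycleGraph_adj'] at huv
        rcases huv with h | h
        · refine ⟨v, ?_⟩
          have hs : u - v = 1 := Fin.ext (by rw [h, hone])
          have hu : u = v + 1 := by rw [eq_add_of_sub_eq hs, add_comm]
          rw [hu]
          exact Sym2.eq_swap
        · refine ⟨u, ?_⟩
          have hs : v - u = 1 := Fin.ext (by rw [h, hone])
          have hv : v = u + 1 := by rw [eq_add_of_sub_eq hs, add_comm]
          rw [hv]
      · rintro ⟨i, hi⟩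
        rcases Sym2.eq_iff.mp hi with ⟨rfl, rfl⟩ | ⟨hh1, hh2⟩
        · exact hadj i
        · rw [← hh2, ← hh1]
          exact (hadj i).symm

lemma disjointCopies_adj {V : Type*} {n : ℕ} {G : SimpleGraph V} {x y : Fin n × V} :
    (disjointCopies n G).Adj x y ↔ x.1 = y.1 ∧ G.Adj x.2 y.2 := Iff.rfl

lemma copies_edge_enum {L : ℕ} [NeZero L] (hL : 3 ≤ L)
    (hinj : Function.Injective (fun i : Fin L => s(i, i + 1)))
    (hrange : (cycleGraph L).edgeSet = Set.range (fun i : Fin L => s(i, i + 1)))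
    (hadj : ∀ i : Fin L, (cycleGraph L).Adj i (i + 1)) :
    Function.Injective (fun p : Fin 2 × Fin L => s((p.1, p.2), (p.1, p.2 + 1))) ∧
    (disjointCopies 2 (cycleGraph L)).edgeSet =
      Set.range (fun p : Fin 2 × Fin L => s((p.1, p.2), (p.1, p.2 + 1))) := by
  constructor
  · rintro ⟨r, k⟩ ⟨r', k'⟩ hp
    simp only [Sym2.eq, Sym2.rel_iff', Prod.mk.injEq, Prod.swap_prod_mk] at hp
    rcases hp with ⟨⟨rfl, rfl⟩, -⟩ | ⟨⟨rfl, hh1⟩, -, hh2⟩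
    · rfl
    · exfalso
      have heq : s(k, k + 1) = s(k', k' + 1) := by
        rw [Sym2.eq_iff]
        right
        exact ⟨hh1, hh2⟩
      have := hinj heq
      rw [this] at hh1
      exact (hadj k').ne hh1
  · ext e
    induction e with
    | _ u v =>
      simp only [mem_edgeSet, Set.mem_range, disjointCopies_adj]
      constructor
      · rintro ⟨h1, h2⟩
        have hmem : s(u.2, v.2) ∈ (cycleGraph L).edgeSet := h2
        rw [hrange] at hmem
        obtain ⟨i, hi⟩ := hmem
        rcases Sym2.eq_iff.mp hi with ⟨h3, h4⟩ | ⟨h3, h4⟩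
        · refine ⟨(u.1, i), ?_⟩
          show s((u.1, i), (u.1, i + 1)) = s(u, v)
          rw [show ((u.1, i) : Fin 2 × Fin L) = u from Prod.ext rfl h3,
            show ((u.1, i + 1) : Fin 2 × Fin L) = v from Prod.ext h1 h4]
        · refine ⟨(u.1, i), ?_⟩
          show s((u.1, i), (u.1, i + 1)) = s(u, v)
          rw [Sym2.eq_iff]
          right
          exact ⟨Prod.ext h1 h3, Prod.ext rfl h4⟩
      · rintro ⟨⟨r, k⟩, hk⟩
        rcases Sym2.eq_iff.mp hk with ⟨rfl, rfl⟩ | ⟨hh1, hh2⟩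
        · exact ⟨rfl, hadj k⟩
        · rw [← hh1, ← hh2]
          exact ⟨rfl, (hadj k).symm⟩

/-- height of the boustrophedon diagonal in column `j` -/
def colE (n j : ℕ) : ℕ := min j (n + 2 - j)

/-- shifted height used for edge sums -/
def colD (n j : ℕ) : ℕ := if j ≤ n / 2 then colE n j else colE n j - 1

def idxN (n M : ℕ) (p : Fin 2 × Fin (M * n)) : ℕ :=
  p.1.val + 2 * (p.2.val / n) + colE n (p.2.val % n)

lemma main_inj {m n M : ℕ} [NeZero m] [NeZero n] [NeZero (M * n)] (hm : m = 2 * M)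
    (D : ℕ → Fin m) :
    Function.Injective (fun p : Fin 2 × Fin (M * n) =>
      ((((p.1.val + 2 * (p.2.val / n) : ℕ) : Fin m) + D (p.2.val % n),
        ((p.2.val : ℕ) : Fin n)) : Fin m × Fin n)) := by
  rintro ⟨r, k⟩ ⟨r', k'⟩ hp
  rw [Prod.mk.injEq] at hp
  obtain ⟨h1, h2⟩ := hp
  have hn : 0 < n := Nat.pos_of_ne_zero (NeZero.ne n)
  simp only at h1 h2
  have hj : k.val % n = k'.val % n := by
    have := congrArg Fin.val h2
    rwa [Fin.val_natCast, Fin.val_natCast] at this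
  rw [hj] at h1
  have h1' := add_right_cancel h1
  have hv := congrArg Fin.val h1'
  rw [Fin.val_natCast, Fin.val_natCast] at hv
  have hwlt : k.val / n < M := (Nat.div_lt_iff_lt_mul hn).mpr k.isLt
  have hwlt' : k'.val / n < M := (Nat.div_lt_iff_lt_mul hn).mpr k'.isLt
  have hr : r.val < 2 := r.isLt
  have hr' : r'.val < 2 := r'.isLt
  rw [Nat.mod_eq_of_lt (by omega), Nat.mod_eq_of_lt (by omega)] at hv
  have hdm : n * (k.val / n) + k.val % n = k.val := Nat.div_add_mod k.val n
  have hdm' : n * (k'.val / n) + k'.val % n = k'.val := Nat.div_add_mod k'.val n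
  have hweq : k.val / n = k'.val / n := by omega
  have hreq : r.val = r'.val := by omega
  rw [hweq, hj] at hdm
  refine Prod.ext (Fin.ext ?_) (Fin.ext ?_)
  · show r.val = r'.val
    exact hreq
  · show k.val = k'.val
    omega

lemma snd_step {n M : ℕ} [NeZero n] [NeZero (M * n)] (k : Fin (M * n)) :
    (((k + 1 : Fin (M * n)).val : ℕ) : Fin n) = ((k.val : ℕ) : Fin n) + 1 := by
  have hcast : k + 1 = ((k.val + 1 : ℕ) : Fin (M * n)) := by
    rw [Nat.cast_add, Nat.cast_one, Fin.cast_val_eq_self]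
  rw [hcast, Fin.val_natCast, ← Nat.cast_one (R := Fin n), ← Nat.cast_add]
  apply Fin.ext
  rw [Fin.val_natCast, Fin.val_natCast, Nat.mod_mod_of_dvd _ (dvd_mul_left n M)]


lemma cast_add_m {m : ℕ} [NeZero m] (x : ℕ) : ((x + m : ℕ) : Fin m) = (x : Fin m) := by
  rw [Nat.cast_add, Fin.natCast_self, add_zero]

lemma sum_idx {m n M : ℕ} [NeZero m] [NeZero (M * n)] (hm : m = 2 * M) (hM : 1 ≤ M)
    (hn4 : 4 ≤ n) (hne : n % 2 = 0) {A : Type*} [AddCommGroup A] (f : Fin m → A)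
    (r : Fin 2) (k : Fin (M * n)) :
    f ((idxN n M (r, k) : ℕ) : Fin m) + f ((idxN n M (r, k + 1) : ℕ) : Fin m) =
      f ((((r.val + 2 * (k.val / n) : ℕ) : Fin m) + ((colD n (k.val % n) : ℕ) : Fin m))) +
      f ((((r.val + 2 * (k.val / n) : ℕ) : Fin m) + ((colD n (k.val % n) : ℕ) : Fin m)) + 1) := by
  have hn : 0 < n := by omega
  have hk1 : (k + 1 : Fin (M * n)).val = (k.val + 1) % (M * n) := by
    rw [show (k + 1 : Fin (M * n)) = ((k.val + 1 : ℕ) : Fin (M * n)) by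
      rw [Nat.cast_add, Nat.cast_one, Fin.cast_val_eq_self], Fin.val_natCast]
  obtain ⟨w, hw⟩ : ∃ w, k.val / n = w := ⟨_, rfl⟩
  obtain ⟨j, hj⟩ : ∃ j, k.val % n = j := ⟨_, rfl⟩
  have hjn : j < n := hj ▸ Nat.mod_lt _ hn
  have hrep : n * w + j = k.val := by rw [← hw, ← hj]; exact Nat.div_add_mod _ _
  have hwM : w < M := hw ▸ (Nat.div_lt_iff_lt_mul hn).mpr k.isLt
  simp only [idxN, hk1, hw, hj]
  by_cases hend : k.val + 1 = M * n
  · -- wrap-around step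
    obtain ⟨M', rfl⟩ : ∃ M', M = M' + 1 := ⟨M - 1, by omega⟩
    have hrep' : n * w + j + 1 = n * M' + n := by
      have : (M' + 1) * n = n * M' + n := by ring
      omega
    have hle1 : n * w ≤ n * M' := Nat.mul_le_mul_left n (by omega)
    have hle2 : w + 1 ≤ M' → n * (w + 1) ≤ n * M' := fun h => Nat.mul_le_mul_left n h
    have hexp : n * (w + 1) = n * w + n := by ring
    have hwM' : w = M' := by omega
    subst hwM'
    have hjval : j = n - 1 := by omega
    subst hjval
    rw [hend, Nat.mod_self, Nat.zero_div, Nat.zero_mod]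
    have hcolE0 : colE n 0 = 0 := by simp [colE]
    have hcolE : colE n (n - 1) = 3 := by simp only [colE]; omega
    have hcolD : colD n (n - 1) = 2 := by
      simp only [colD, colE]
      rw [if_neg (by omega : ¬ (n - 1 ≤ n / 2))]
      omega
    rw [hcolE0, hcolE, hcolD]
    have e1 : ((r.val + 2 * w + 3 : ℕ) : Fin m) =
        (((r.val + 2 * w : ℕ) : Fin m) + ((2 : ℕ) : Fin m)) + 1 := by
      rw [← Nat.cast_add, ← Nat.cast_one (R := Fin m), ← Nat.cast_add,
        show r.val + 2 * w + 2 + 1 = r.val + 2 * w + 3 from by omega]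
    have e2 : ((r.val + 2 * 0 + 0 : ℕ) : Fin m) =
        ((r.val + 2 * w : ℕ) : Fin m) + ((2 : ℕ) : Fin m) := by
      rw [← Nat.cast_add, show r.val + 2 * w + 2 = r.val + 2 * 0 + 0 + m from by omega,
        cast_add_m]
    rw [e1, e2, add_comm]
  · -- ordinary step
    have hlt : k.val + 1 < M * n := by omega
    rw [Nat.mod_eq_of_lt hlt]
    by_cases hjend : j = n - 1
    · subst hjend
      have hkk : k.val + 1 = n * (w + 1) := by
        have : n * (w + 1) = n * w + n := by ring
        omega
      rw [hkk, Nat.mul_mod_right, Nat.mul_div_cancel_left _ hn]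
      have hcolE0 : colE n 0 = 0 := by simp [colE]
      have hcolE : colE n (n - 1) = 3 := by simp only [colE]; omega
      have hcolD : colD n (n - 1) = 2 := by
        simp only [colD, colE]
        rw [if_neg (by omega : ¬ (n - 1 ≤ n / 2))]
        omega
      rw [hcolE0, hcolE, hcolD]
      have e1 : ((r.val + 2 * w + 3 : ℕ) : Fin m) =
          (((r.val + 2 * w : ℕ) : Fin m) + ((2 : ℕ) : Fin m)) + 1 := by
        rw [← Nat.cast_add, ← Nat.cast_one (R := Fin m), ← Nat.cast_add,
          show r.val + 2 * w + 2 + 1 = r.val + 2 * w + 3 from by omega]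
      have e2 : ((r.val + 2 * (w + 1) + 0 : ℕ) : Fin m) =
          ((r.val + 2 * w : ℕ) : Fin m) + ((2 : ℕ) : Fin m) := by
        rw [← Nat.cast_add, show r.val + 2 * w + 2 = r.val + 2 * (w + 1) + 0 from by omega]
      rw [e1, e2, add_comm]
    · have hkk : k.val + 1 = (j + 1) + n * w := by omega
      have h5 : (k.val + 1) % n = j + 1 := by
        rw [hkk, Nat.add_mul_mod_self_left]
        exact Nat.mod_eq_of_lt (by omega)
      have h6 : (k.val + 1) / n = w := by
        rw [hkk, Nat.add_mul_div_left _ _ hn, Nat.div_eq_of_lt (by omega)]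
        omega
      rw [h5, h6]
      by_cases hhalf : j ≤ n / 2
      · have hE : colE n (j + 1) = colE n j + 1 := by simp only [colE]; omega
        have hD : colD n j = colE n j := if_pos hhalf
        rw [hE, hD]
        have e1 : ((r.val + 2 * w + colE n j : ℕ) : Fin m) =
            ((r.val + 2 * w : ℕ) : Fin m) + ((colE n j : ℕ) : Fin m) := by
          rw [← Nat.cast_add]
        have e2 : ((r.val + 2 * w + (colE n j + 1) : ℕ) : Fin m) =
            (((r.val + 2 * w : ℕ) : Fin m) + ((colE n j : ℕ) : Fin m)) + 1 := by
          rw [← Nat.cast_add, ← Nat.cast_one (R := Fin m), ← Nat.cast_add,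
            show r.val + 2 * w + colE n j + 1 = r.val + 2 * w + (colE n j + 1) from by omega]
        rw [e1, e2]
      · have hEge : 3 ≤ colE n j := by simp only [colE]; omega
        have hE : colE n (j + 1) = colE n j - 1 := by simp only [colE]; omega
        have hD : colD n j = colE n j - 1 := if_neg hhalf
        rw [hE, hD]
        have e1 : ((r.val + 2 * w + colE n j : ℕ) : Fin m) =
            (((r.val + 2 * w : ℕ) : Fin m) + ((colE n j - 1 : ℕ) : Fin m)) + 1 := by
          rw [← Nat.cast_add, ← Nat.cast_one (R := Fin m), ← Nat.cast_add,
            show r.val + 2 * w + (colE n j - 1) + 1 = r.val + 2 * w + colE n j from by omega]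
        have e2 : ((r.val + 2 * w + (colE n j - 1) : ℕ) : Fin m) =
            ((r.val + 2 * w : ℕ) : Fin m) + ((colE n j - 1 : ℕ) : Fin m) := by
          rw [← Nat.cast_add]
        rw [e1, e2, add_comm]


section assembly
open Function

lemma extract_seq {A : Type*} [AddCommGroup A] [Fintype A] {m : ℕ} [NeZero m] (hm : 3 ≤ m)
    (hA : Fintype.card A = m) (h : IsCordial A (cycleGraph m)) :
    ∃ f : Fin m → A, Function.Bijective f ∧
      Function.Bijective (fun i : Fin m => f i + f (i + 1)) := by
  obtain ⟨c, hv, he⟩ := h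
  obtain ⟨hinj, hrange⟩ := cycle_edge_enum hm
  refine ⟨c, bijective_of_card_of_fibers c (by simp [hA]) hv, ?_⟩
  apply bijective_of_card_of_fibers _ (by simp [hA])
  intro a b
  have h2 := he a b
  rw [edge_fiber_eq _ hinj hrange, edge_fiber_eq _ hinj hrange] at h2
  simpa [edgeLabel] using h2

lemma construction {A B : Type*} [AddCommGroup A] [AddCommGroup B]
    {n M : ℕ} [NeZero (2 * M)] [NeZero n] [NeZero (M * n)]
    (hM : 1 ≤ M) (hn4 : 4 ≤ n) (hne : n % 2 = 0) (hL : 3 ≤ M * n)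
    (f : Fin (2 * M) → A) (g : Fin n → B)
    (hf : Function.Bijective f)
    (hfS : Function.Bijective (fun i : Fin (2 * M) => f i + f (i + 1)))
    (hg : Function.Bijective g)
    (hgS : Function.Bijective (fun j : Fin n => g j + g (j + 1))) :
    IsCordial (A × B) (disjointCopies 2 (cycleGraph (M * n))) := by
  set L := M * n with hLdef
  -- the vertex labeling
  set c : Fin 2 × Fin L → A × B :=
    fun p => (f ((idxN n M p : ℕ) : Fin (2 * M)), g ((p.2.val : ℕ) : Fin n)) with hc
  -- bijectivity of the vertex labeling
  have hFcard : Fintype.card (Fin 2 × Fin L) = Fintype.card (Fin (2 * M) × Fin n) := by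
    simp only [Fintype.card_prod, Fintype.card_fin, hLdef]
    ring
  have hcb : Function.Bijective c := by
    have h1 : c = (Prod.map f g) ∘ (fun p : Fin 2 × Fin L =>
        ((((p.1.val + 2 * (p.2.val / n) : ℕ) : Fin (2 * M)) +
            ((colE n (p.2.val % n) : ℕ) : Fin (2 * M)),
          ((p.2.val : ℕ) : Fin n)) : Fin (2 * M) × Fin n)) := by
      funext p
      simp only [hc, comp_apply, Prod.map, idxN]
      rw [Nat.cast_add]
    rw [h1]
    refine (hf.prodMap hg).comp ((Fintype.bijective_iff_injective_and_card _).mpr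
      ⟨main_inj rfl (fun x => ((colE n x : ℕ) : Fin (2 * M))), hFcard⟩)
  -- the edge enumeration
  obtain ⟨hinjL, hrangeL⟩ := cycle_edge_enum (m := L) hL
  have hadjL : ∀ i : Fin L, (cycleGraph L).Adj i (i + 1) := fun i => by
    rw [← SimpleGraph.mem_edgeSet, hrangeL]
    exact ⟨i, rfl⟩
  obtain ⟨hinjE, hrangeE⟩ := copies_edge_enum hL hinjL hrangeL hadjL
  -- bijectivity of the induced edge labeling
  have hTb : Function.Bijective
      (fun p : Fin 2 × Fin L => edgeLabel c s((p.1, p.2), (p.1, p.2 + 1))) := by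
    have h1 : (fun p : Fin 2 × Fin L => edgeLabel c s((p.1, p.2), (p.1, p.2 + 1))) =
        (Prod.map (fun i : Fin (2 * M) => f i + f (i + 1))
            (fun j : Fin n => g j + g (j + 1))) ∘
          (fun p : Fin 2 × Fin L =>
            ((((p.1.val + 2 * (p.2.val / n) : ℕ) : Fin (2 * M)) +
                ((colD n (p.2.val % n) : ℕ) : Fin (2 * M)),
              ((p.2.val : ℕ) : Fin n)) : Fin (2 * M) × Fin n)) := by
      funext p
      simp only [edgeLabel, Sym2.lift_mk, comp_apply, Prod.map, hc, Prod.mk_add_mk]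
      refine Prod.ext ?_ ?_
      · exact sum_idx rfl hM hn4 hne f p.1 p.2
      · show g ((p.2.val : ℕ) : Fin n) + g (((p.2 + 1 : Fin L).val : ℕ) : Fin n) = _
        rw [snd_step]
    rw [h1]
    refine ((hfS.prodMap hgS)).comp ((Fintype.bijective_iff_injective_and_card _).mpr
      ⟨main_inj rfl (fun x => ((colD n x : ℕ) : Fin (2 * M))), hFcard⟩)
  refine ⟨c, fun a b => ?_, fun a b => ?_⟩
  · rw [fiber_ncard_one c hcb a, fiber_ncard_one c hcb b]
    omega
  · rw [edge_fiber_eq _ hinjE hrangeE, edge_fiber_eq _ hinjE hrangeE,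
      fiber_ncard_one _ hTb a, fiber_ncard_one _ hTb b]
    omega

end assembly

theorem two_long_cycles_cordial (A B : Type*) [AddCommGroup A] [Fintype A]
    [AddCommGroup B] [Fintype B] (m n : ℕ)
    (hA : Fintype.card A = m) (hB : Fintype.card B = n)
    (hIA : 1 < {a : A | addOrderOf a = 2}.ncard)
    (hIB : 1 < {b : B | addOrderOf b = 2}.ncard)
    (hm : 3 ≤ m) (hn : 3 ≤ n) (hmn : 3 ≤ m * n / 2)
    (hAm : IsCordial A (cycleGraph m)) (hBn : IsCordial B (cycleGraph n)) :
    IsCordial (A × B) (disjointCopies 2 (cycleGraph (m * n / 2))) := by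
  obtain ⟨a, ha⟩ := Set.nonempty_of_ncard_ne_zero (s := {a : A | addOrderOf a = 2}) (by omega)
  obtain ⟨b, hb⟩ := Set.nonempty_of_ncard_ne_zero (s := {b : B | addOrderOf b = 2}) (by omega)
  have h2m : 2 ∣ m := by
    rw [← hA, ← (ha : addOrderOf a = 2)]
    exact addOrderOf_dvd_card
  have h2n : 2 ∣ n := by
    rw [← hB, ← (hb : addOrderOf b = 2)]
    exact addOrderOf_dvd_card
  obtain ⟨M, rfl⟩ := h2m
  have hMn : 2 * M * n / 2 = M * n := by
    rw [Nat.mul_assoc]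
    exact Nat.mul_div_cancel_left _ (by norm_num)
  rw [hMn] at hmn ⊢
  haveI : NeZero (2 * M) := ⟨by omega⟩
  haveI : NeZero n := ⟨by omega⟩
  haveI : NeZero (M * n) := ⟨by omega⟩
  obtain ⟨f, hf, hfS⟩ := extract_seq hm hA hAm
  obtain ⟨g, hg, hgS⟩ := extract_seq hn hB hBn
  exact construction (by omega) (by omega) (by omega) hmn f g hf hfS hg hgS
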